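/- Let n ≥ 2 be an integer, and let a_+ denote the unique real root of t^{2n+2} + n·t^{2n+1} = 1 lying in (0,1). Then for all positive real numbers x_1, …, x_n, y one has x_1 + ⋯ + x_n + y + y^n/(x_1⋯x_n) + 1/y ≥ (n+1)·a_+^n + a_+^{n+1} + a_+^{−(n+1)}, with equality if and only if x_1 = ⋯ = x_n = a_+^n and y = a_+^{n+1}. (That is, the mirror superpotential f(x_1,…,x_n,y) = x_1+⋯+x_n + y + y^n/(x_1⋯x_n) + 1/y attains its global minimum on the positive orthant exactly at the conifold point (a_+^n,…,a_+^n,a_+^{n+1}), and the conifold value is T_con = g(a_+) with g(t) = (n+1)t^n + t^{n+1} + t^{−(n+1)}.) -/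

import Mathlib

private lemma key_tangent (u v : ℝ) (hu : 0 < u) (hv : 0 < v) :
    v * (1 + Real.log u - Real.log v) ≤ u ∧
      (v * (1 + Real.log u - Real.log v) = u ↔ u = v) := by
  have hlog : Real.log u - Real.log v = Real.log (u / v) := (Real.log_div hu.ne' hv.ne').symm
  have huv : 0 < u / v := div_pos hu hv
  have h1 : Real.log (u / v) ≤ u / v - 1 := Real.log_le_sub_one_of_pos huv
  have hkey : v * (u / v - 1) = u - v := by field_simp
  have h1' : Real.log u - Real.log v ≤ u / v - 1 := by rw [hlog]; exact h1
  constructor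
  · nlinarith [mul_le_mul_of_nonneg_left h1' hv.le]
  · constructor
    · intro h
      by_contra hne
      have hne1 : u / v ≠ 1 := fun h' => hne ((div_eq_one_iff_eq hv.ne').mp h')
      have h2 : Real.log u - Real.log v < u / v - 1 := by
        rw [hlog]; exact Real.log_lt_sub_one_of_pos huv hne1
      nlinarith [mul_lt_mul_of_pos_left h2 hv]
    · intro h
      subst h
      simp

/-- Let `n ≥ 2` and let `a₊ ∈ (0,1)` be the real root of
`t^(2n+2) + n·t^(2n+1) = 1` there. Then for all positive reals `x₁,…,xₙ, y`,
`x₁+⋯+xₙ + y + yⁿ/(x₁⋯xₙ) + 1/y ≥ (n+1)a₊ⁿ + a₊^(n+1) + a₊^(−(n+1))`, with equality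
iff `x₁ = ⋯ = xₙ = a₊ⁿ` and `y = a₊^(n+1)`. -/
theorem stmt_9 (n : ℕ) (hn : 2 ≤ n)
    (ap : ℝ) (hap : ap ∈ Set.Ioo (0 : ℝ) 1)
    (hapr : ap ^ (2 * n + 2) + (n : ℝ) * ap ^ (2 * n + 1) = 1) :
    ∀ (x : Fin n → ℝ) (y : ℝ), (∀ i, 0 < x i) → 0 < y →
      (((n : ℝ) + 1) * ap ^ n + ap ^ (n + 1) + ap ^ (-((n : ℤ) + 1)) ≤
          (∑ i, x i) + y + y ^ n / (∏ i, x i) + 1 / y) ∧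
      ((∑ i, x i) + y + y ^ n / (∏ i, x i) + 1 / y =
          ((n : ℝ) + 1) * ap ^ n + ap ^ (n + 1) + ap ^ (-((n : ℤ) + 1)) ↔
        (∀ i, x i = ap ^ n) ∧ y = ap ^ (n + 1)) := by
  obtain ⟨hap0, hap1⟩ := hap
  intro x y hx hy
  set A := ap ^ n with hA
  set B := ap ^ (n + 1) with hB
  have hA0 : 0 < A := by rw [hA]; positivity
  have hB0 : 0 < B := by rw [hB]; positivity
  have hzpow : ap ^ (-((n : ℤ) + 1)) = B⁻¹ := by
    rw [show -((n : ℤ) + 1) = -((n + 1 : ℕ) : ℤ) by push_cast; ring, zpow_neg, zpow_natCast, hB]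
  have hrel : B⁻¹ = B + (n : ℝ) * A := by
    refine inv_eq_of_mul_eq_one_right ?_
    have h1 : B * B = ap ^ (2 * n + 2) := by
      rw [hB, ← pow_add]; congr 1; omega
    have h2 : B * A = ap ^ (2 * n + 1) := by
      rw [hB, hA, ← pow_add]; congr 1; omega
    calc B * (B + (n : ℝ) * A) = B * B + (n : ℝ) * (B * A) := by ring
      _ = 1 := by rw [h1, h2, hapr]
  set P := ∏ i, x i with hP
  set Q := y ^ n / P with hQ
  have hP0 : 0 < P := by rw [hP]; exact Finset.prod_pos fun i _ => hx i
  have hQ0 : 0 < Q := by rw [hQ]; exact div_pos (pow_pos hy n) hP0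
  set S := ∑ i, Real.log (x i) with hS
  have hlogP : Real.log P = S := by rw [hP, hS]; exact Real.log_prod fun i _ => (hx i).ne'
  have hlogQ : Real.log Q = (n : ℝ) * Real.log y - S := by
    rw [hQ, Real.log_div (pow_ne_zero n hy.ne') hP0.ne', Real.log_pow, hlogP]
  have hlogA : Real.log A = (n : ℝ) * Real.log ap := by rw [hA, Real.log_pow]
  have hlogB : Real.log B = ((n : ℝ) + 1) * Real.log ap := by
    rw [hB, Real.log_pow]; push_cast; ring
  have hsum1 : (∑ i, A * (1 + Real.log (x i) - Real.log A))
      = (n : ℝ) * A * (1 - Real.log A) + A * S := by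
    rw [← Finset.mul_sum, Finset.sum_sub_distrib, Finset.sum_add_distrib, Finset.sum_const,
      Finset.sum_const, Finset.card_univ, Fintype.card_fin, ← hS, nsmul_eq_mul, nsmul_eq_mul]
    ring
  have hE : (∑ i, A * (1 + Real.log (x i) - Real.log A))
      + B * (1 + Real.log y - Real.log B)
      + A * (1 + Real.log Q - Real.log A)
      + B⁻¹ * (1 + Real.log (1 / y) - Real.log B⁻¹)
      = ((n : ℝ) + 1) * A + B + B⁻¹ := by
    rw [hsum1, one_div, Real.log_inv, Real.log_inv, hlogQ, hlogA, hlogB, hrel]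
    ring
  have i1 : (∑ i, A * (1 + Real.log (x i) - Real.log A)) ≤ ∑ i, x i :=
    Finset.sum_le_sum fun i _ => (key_tangent (x i) A (hx i) hA0).1
  have i2 := (key_tangent y B hy hB0).1
  have i3 := (key_tangent Q A hQ0 hA0).1
  have i4 := (key_tangent (1 / y) B⁻¹ (by positivity) (by positivity)).1
  rw [hzpow]
  constructor
  · linarith
  constructor
  · intro heq
    have hg2 : B * (1 + Real.log y - Real.log B) = y := by linarith
    have hD0 : (∑ i, (x i - A * (1 + Real.log (x i) - Real.log A))) = 0 := by
      rw [Finset.sum_sub_distrib]; linarith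
    have hall := (Finset.sum_eq_zero_iff_of_nonneg fun j _ => by
        linarith [(key_tangent (x j) A (hx j) hA0).1]).mp hD0
    refine ⟨fun i => ?_, (key_tangent y B hy hB0).2.mp hg2⟩
    have h := hall i (Finset.mem_univ i)
    exact (key_tangent (x i) A (hx i) hA0).2.mp (by linarith)
  · rintro ⟨hxa, hyb⟩
    have hBA : B ^ n = A * A ^ n := by
      rw [hB, hA, ← pow_mul, ← pow_mul, ← pow_add]
      congr 1; ring
    have hPA : P = A ^ n := by
      rw [hP]
      simp [hxa]
    have hQA : Q = A := by
      rw [hQ, hPA, hyb, hBA, mul_div_assoc, div_self (pow_ne_zero n hA0.ne'), mul_one]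
    have hsx : (∑ i, x i) = (n : ℝ) * A := by
      simp [hxa, Finset.sum_const, Finset.card_univ, nsmul_eq_mul]
    rw [hsx, hyb, hQA, one_div]
    ring
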